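/- arXiv:2006.10835 — 2 statements merged into one kernel-verified Lean document; each statement's English description precedes it below -/
import Mathlib

section
/- Under the bounded confidence dynamics x_i' = x̄_i - x_i with x̄_i a convex combination of the positions, the diameter d(t) = max_{i,j} |x_i(t) - x_j(t)| is non-increasing: d(t_2) <= d(t_1) for all t_2 >= t_1. -/
open Finset

open Set Filter in
/-- Barrier lemma: if each `φ k` has derivative bounded by `M t - φ k t` where
`M t` is the max over `k`, then `M` is non-increasing. -/
lemma max_nonincreasing_aux {N : ℕ} (hne : (Finset.univ : Finset (Fin N)).Nonempty)
    {a b : ℝ} (φ φ' : Fin N → ℝ → ℝ)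
    (hd : ∀ k, ∀ t ∈ Set.Icc a b, HasDerivAt (φ k) (φ' k t) t)
    (hb : ∀ k, ∀ t ∈ Set.Icc a b,
      φ' k t ≤ (Finset.univ.sup' hne fun l => φ l t) - φ k t) :
    ∀ t ∈ Set.Icc a b, (Finset.univ.sup' hne fun l => φ l t)
      ≤ Finset.univ.sup' hne fun l => φ l a := by
  set M : ℝ → ℝ := fun t => Finset.univ.sup' hne fun l => φ l t with hM
  have hMc : ∀ t ∈ Set.Icc a b, ContinuousAt M t := by
    intro t ht
    exact ContinuousAt.finset_sup'_apply hne fun l _ => (hd l t ht).continuousAt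
  have key : ∀ ε > (0:ℝ), ∀ t ∈ Set.Icc a b, M t ≤ M a + ε * Real.exp (t - a) := by
    intro ε hε
    have hB : ∀ s : ℝ, HasDerivAt (fun t => M a + ε * Real.exp (t - a))
        (ε * Real.exp (s - a)) s := by
      intro s
      have h1 : HasDerivAt (fun t : ℝ => t - a) 1 s := (hasDerivAt_id s).sub_const a
      have h2 : HasDerivAt (fun t : ℝ => Real.exp (t - a)) (Real.exp (s - a) * 1) s :=
        h1.exp
      simpa using (h2.const_mul ε).const_add (M a)
    refine image_le_of_liminf_slope_right_lt_deriv_boundary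
      (f := M) (f' := fun _ => (0:ℝ)) (a := a) (b := b)
      (fun t ht => (hMc t ht).continuousWithinAt) ?_ ?_ hB ?_
    · -- slope condition
      intro s hs r hr
      refine Filter.Eventually.frequently ?_
      have hr' : (0:ℝ) < r := hr
      have hsIcc : s ∈ Set.Icc a b := ⟨hs.1, hs.2.le⟩
      have hA : ∀ l : Fin N, φ l s = M s →
          ∀ᶠ z in nhdsWithin s (Set.Ioi s), slope (φ l) s z < r := by
        intro l hl
        have htend : Filter.Tendsto (slope (φ l) s) (nhdsWithin s {s}ᶜ) (nhds (φ' l s)) :=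
          hasDerivAt_iff_tendsto_slope.1 (hd l s hsIcc)
        have hlt : φ' l s < r := by
          have h2 := hb l s hsIcc
          rw [hl] at h2
          linarith
        have h3 : ∀ᶠ z in nhdsWithin s {s}ᶜ, slope (φ l) s z < r :=
          htend (Iio_mem_nhds hlt)
        exact h3.filter_mono (nhdsWithin_mono s fun z hz => ne_of_gt hz)
      have hNA : ∀ l : Fin N, φ l s < M s →
          ∀ᶠ z in nhdsWithin s (Set.Ioi s), φ l z < M z := by
        intro l hl
        have hcont : ContinuousAt (fun z => M z - φ l z) s :=
          (hMc s hsIcc).sub (hd l s hsIcc).continuousAt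
        have hpos : (0:ℝ) < M s - φ l s := by linarith
        have h4 : ∀ᶠ z in nhds s, 0 < M z - φ l z := hcont (Ioi_mem_nhds hpos)
        exact (h4.filter_mono nhdsWithin_le_nhds).mono fun z hz => by linarith
      have hall : ∀ᶠ z in nhdsWithin s (Set.Ioi s),
          (∀ l : Fin N, (φ l s = M s → slope (φ l) s z < r) ∧
            (φ l s < M s → φ l z < M z)) ∧ s < z := by
        refine Filter.Eventually.and (Filter.eventually_all.2 fun l => ?_)
          self_mem_nhdsWithin
        have hle : φ l s ≤ M s := Finset.le_sup' (fun l => φ l s) (Finset.mem_univ l)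
        rcases eq_or_lt_of_le hle with heq | hlt
        · exact ((hA l heq).mono fun z hz => ⟨fun _ => hz, fun h => absurd heq h.ne⟩)
        · exact ((hNA l hlt).mono fun z hz => ⟨fun h => absurd h (ne_of_lt hlt), fun _ => hz⟩)
      refine hall.mono ?_
      rintro z ⟨hz, hsz⟩
      obtain ⟨l, -, hlM⟩ := Finset.exists_mem_eq_sup' hne (fun l => φ l z)
      have hlM' : M z = φ l z := hlM
      have hle : φ l s ≤ M s := Finset.le_sup' (fun l => φ l s) (Finset.mem_univ l)
      have hls : φ l s = M s := by
        by_contra h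
        have hlt := lt_of_le_of_ne hle h
        exact absurd (hlM' ▸ (hz l).2 hlt) (lt_irrefl _)
      have heqs : slope M s z = slope (φ l) s z := by
        rw [slope_def_field, slope_def_field, hlM', ← hls]
      rw [heqs]
      exact (hz l).1 hls
    · have := mul_pos hε (Real.exp_pos (a - a))
      linarith
    · intro s hs hMB
      exact mul_pos hε (Real.exp_pos (s - a))
  intro t ht
  refine le_of_forall_pos_le_add fun c hc => ?_
  have hexp : (0:ℝ) < Real.exp (t - a) := Real.exp_pos _
  have := key (c / Real.exp (t - a)) (by positivity) t ht
  rw [div_mul_cancel₀ c (ne_of_gt hexp)] at this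
  exact this

/-- The diameter of the configuration is non-increasing under the bounded
confidence dynamics. -/
theorem stmt4 {d N : ℕ} (x : Fin N → ℝ → EuclideanSpace ℝ (Fin d))
    (a : ℝ → Fin N → Fin N → ℝ)
    (ha_nonneg : ∀ t i j, 0 ≤ a t i j)
    (ha_sum : ∀ t i, ∑ j, a t i j = 1)
    (hderiv : ∀ i t, 0 ≤ t →
      HasDerivAt (x i) ((∑ j, a t i j • x j t) - x i t) t)
    (t₁ t₂ : ℝ) (h0 : 0 ≤ t₁) (h12 : t₁ ≤ t₂) :
    (⨆ p : Fin N × Fin N, dist (x p.1 t₂) (x p.2 t₂)) ≤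
      ⨆ p : Fin N × Fin N, dist (x p.1 t₁) (x p.2 t₁) := by
  rcases Nat.eq_zero_or_pos N with hN | hN
  · subst hN
    haveI : IsEmpty (Fin 0 × Fin 0) := by infer_instance
    rw [Real.iSup_of_isEmpty, Real.iSup_of_isEmpty]
  haveI : Nonempty (Fin N) := Fin.pos_iff_nonempty.1 hN
  have hne : (Finset.univ : Finset (Fin N)).Nonempty := Finset.univ_nonempty
  have hbdd : BddAbove (Set.range fun p : Fin N × Fin N => dist (x p.1 t₁) (x p.2 t₁)) :=
    Set.Finite.bddAbove (Set.finite_range _)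
  set D₁ := ⨆ p : Fin N × Fin N, dist (x p.1 t₁) (x p.2 t₁) with hD₁
  -- projection lemma: for any vector w, the max of ⟪w, x k t⟫ is non-increasing
  have hgen : ∀ w : EuclideanSpace ℝ (Fin d),
      (Finset.univ.sup' hne fun k => (inner ℝ w (x k t₂) : ℝ))
        ≤ Finset.univ.sup' hne fun k => (inner ℝ w (x k t₁) : ℝ) := by
    intro w
    set φ : Fin N → ℝ → ℝ := fun k t => inner ℝ w (x k t) with hφ
    set φ' : Fin N → ℝ → ℝ := fun k t => (∑ j, a t k j * φ j t) - φ k t with hφ'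
    have hd : ∀ k, ∀ t ∈ Set.Icc t₁ t₂, HasDerivAt (φ k) (φ' k t) t := by
      intro k t ht
      have h0t : (0:ℝ) ≤ t := le_trans h0 ht.1
      have hcomp := (innerSL ℝ w).hasFDerivAt.comp_hasDerivAt t (hderiv k t h0t)
      have heq : (innerSL ℝ w) ((∑ j, a t k j • x j t) - x k t) = φ' k t := by
        simp only [innerSL_apply_apply, inner_sub_right, inner_sum, real_inner_smul_right, hφ', hφ]
      rw [heq] at hcomp
      exact hcomp
    have hb : ∀ k, ∀ t ∈ Set.Icc t₁ t₂,
        φ' k t ≤ (Finset.univ.sup' hne fun l => φ l t) - φ k t := by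
      intro k t ht
      have hsum : (∑ j, a t k j * φ j t)
          ≤ ∑ j, a t k j * (Finset.univ.sup' hne fun l => φ l t) := by
        refine Finset.sum_le_sum fun j _ => ?_
        exact mul_le_mul_of_nonneg_left
          (Finset.le_sup' (fun l => φ l t) (Finset.mem_univ j)) (ha_nonneg t k j)
      rw [← Finset.sum_mul, ha_sum t k, one_mul] at hsum
      simp only [hφ']
      linarith
    exact max_nonincreasing_aux hne φ φ' hd hb t₂ ⟨h12, le_refl _⟩
  refine ciSup_le fun p => ?_
  by_cases hxy : x p.1 t₂ = x p.2 t₂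
  · rw [hxy, dist_self]
    calc (0:ℝ) = dist (x p.1 t₁) (x p.1 t₁) := (dist_self _).symm
      _ ≤ D₁ := le_ciSup hbdd (p.1, p.1)
  · set u := x p.1 t₂ - x p.2 t₂ with hu
    have hu0 : u ≠ 0 := sub_ne_zero.2 hxy
    set v : EuclideanSpace ℝ (Fin d) := ‖u‖⁻¹ • u with hv
    have hvnorm : ‖v‖ = 1 := by
      rw [hv, norm_smul, norm_inv, norm_norm, inv_mul_cancel₀ (norm_ne_zero_iff.2 hu0)]
    have hinner : (inner ℝ v u : ℝ) = ‖u‖ := by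
      rw [hv, real_inner_smul_left, real_inner_self_eq_norm_sq, sq,
        inv_mul_cancel_left₀ (norm_ne_zero_iff.2 hu0)]
    have hdist : dist (x p.1 t₂) (x p.2 t₂) = (inner ℝ v (x p.1 t₂) : ℝ) - inner ℝ v (x p.2 t₂) := by
      rw [dist_eq_norm, ← hinner, hu, inner_sub_right]
    rw [hdist]
    have h1 : (inner ℝ v (x p.1 t₂) : ℝ)
        ≤ Finset.univ.sup' hne fun k => (inner ℝ v (x k t₁) : ℝ) :=
      le_trans (Finset.le_sup' (fun k => (inner ℝ v (x k t₂) : ℝ)) (Finset.mem_univ p.1)) (hgen v)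
    have h2 : (inner ℝ (-v) (x p.2 t₂) : ℝ)
        ≤ Finset.univ.sup' hne fun k => (inner ℝ (-v) (x k t₁) : ℝ) :=
      le_trans (Finset.le_sup' (fun k => (inner ℝ (-v) (x k t₂) : ℝ)) (Finset.mem_univ p.2))
        (hgen (-v))
    obtain ⟨q, -, hq⟩ := Finset.exists_mem_eq_sup' hne (fun k => (inner ℝ v (x k t₁) : ℝ))
    obtain ⟨q', -, hq'⟩ := Finset.exists_mem_eq_sup' hne (fun k => (inner ℝ (-v) (x k t₁) : ℝ))
    have h3 : (inner ℝ v (x q t₁) : ℝ) + inner ℝ (-v) (x q' t₁)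
        = inner ℝ v (x q t₁ - x q' t₁) := by
      rw [inner_sub_right, inner_neg_left]
      ring
    have h4 : (inner ℝ v (x q t₁ - x q' t₁) : ℝ) ≤ dist (x q t₁) (x q' t₁) := by
      calc (inner ℝ v (x q t₁ - x q' t₁) : ℝ) ≤ ‖v‖ * ‖x q t₁ - x q' t₁‖ := real_inner_le_norm _ _
        _ = dist (x q t₁) (x q' t₁) := by rw [hvnorm, one_mul, dist_eq_norm]
    have h5 : dist (x q t₁) (x q' t₁) ≤ D₁ := le_ciSup hbdd (q, q')
    have h6 : (inner ℝ (-v) (x p.2 t₂) : ℝ) = -inner ℝ v (x p.2 t₂) := by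
      rw [inner_neg_left]
    rw [h6] at h2
    rw [hq] at h1
    rw [hq'] at h2
    linarith [h3 ▸ le_trans h4 h5]
end

section
/- Suppose two agents i, j on the real line evolve so that |x_i(t) - x_j(t)| is non-increasing whenever it lies in [1 - r_*, 1] (with 0 < r_* < 1), and suppose along a sequence t_n → ∞ the distance |x_i(t_n) - x_j(t_n)| converges to a limit L that is not in the open interval (0, 1). If there exists some n with |x_i(t_n) - x_j(t_n)| < 1, then L = 0. -/
open Filter

/-- Barrier lemma: if `f` is continuous, non-increasing whenever it stays in
`[1 - r, 1]`, and `f s₀ < c` with `1 - r < c ≤ 1`, then `f u < c` for all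
`u ≥ s₀`. -/
lemma barrier (f : ℝ → ℝ) (hf : Continuous f) (r : ℝ)
    (hmono : ∀ s t : ℝ, s ≤ t →
      (∀ u ∈ Set.Icc s t, f u ∈ Set.Icc (1 - r) 1) → f t ≤ f s)
    (s₀ c : ℝ) (hfs₀ : f s₀ < c) (hc1 : 1 - r < c) (hc2 : c ≤ 1) :
    ∀ u, s₀ ≤ u → f u < c := by
  by_contra h
  push_neg at h
  obtain ⟨u₀, hu₀, hcu₀⟩ := h
  set S : Set ℝ := {u | s₀ ≤ u} ∩ f ⁻¹' Set.Ici c with hS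
  have hSc : IsClosed S :=
    (isClosed_le continuous_const continuous_id).inter (isClosed_Ici.preimage hf)
  have hSne : S.Nonempty := ⟨u₀, hu₀, hcu₀⟩
  have hSbdd : BddBelow S := ⟨s₀, fun x hx => hx.1⟩
  set b := sInf S with hb
  have hbS : b ∈ S := hSc.csInf_mem hSne hSbdd
  have hs₀b' : s₀ ≤ b := hbS.1
  have hfb : c ≤ f b := hbS.2
  have hlt : ∀ u, s₀ ≤ u → u < b → f u < c := by
    intro u hu hub
    by_contra hcon
    push_neg at hcon
    exact absurd (csInf_le hSbdd ⟨hu, hcon⟩) (not_le.mpr hub)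
  have hs₀b : s₀ < b := by
    rcases lt_or_eq_of_le hs₀b' with h | h
    · exact h
    · exact absurd hfb (not_le.mpr (h ▸ hfs₀))
  have hfb_le : f b ≤ c := by
    have htend : Tendsto f (nhdsWithin b (Set.Iio b)) (nhds (f b)) :=
      (hf.tendsto b).mono_left nhdsWithin_le_nhds
    refine le_of_tendsto htend ?_
    filter_upwards [Ioo_mem_nhdsLT_of_mem (Set.mem_Ioc.mpr ⟨hs₀b, le_rfl⟩)] with u hu
    exact (hlt u hu.1.le hu.2).le
  have hfb_eq : f b = c := le_antisymm hfb_le hfb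
  have hle_c : ∀ u ∈ Set.Icc s₀ b, f u ≤ c := by
    intro u hu
    rcases lt_or_eq_of_le hu.2 with h | h
    · exact (hlt u hu.1 h).le
    · rw [h, hfb_eq]
  set A : Set ℝ := Set.Icc s₀ b ∩ f ⁻¹' Set.Iic (1 - r) with hA
  rcases A.eq_empty_or_nonempty with hAe | hAne
  · -- f stays in (1-r, c] on [s₀, b], so monotone applies on [s₀, b]
    have := hmono s₀ b hs₀b.le (by
      intro u hu
      refine ⟨?_, le_trans (hle_c u hu) hc2⟩
      by_contra hcon
      push_neg at hcon
      have hmem : u ∈ A := ⟨hu, hcon.le⟩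
      rw [hAe] at hmem
      exact hmem)
    exact absurd (lt_of_le_of_lt (hfb_eq ▸ this) hfs₀) (lt_irrefl c)
  · have hAc : IsClosed A := isClosed_Icc.inter (isClosed_Iic.preimage hf)
    have hAbdd : BddAbove A := ⟨b, fun x hx => hx.1.2⟩
    set a := sSup A with ha
    have haA : a ∈ A := hAc.csSup_mem hAne hAbdd
    have hab' : a ≤ b := haA.1.2
    have hs₀a : s₀ ≤ a := haA.1.1
    have hfa : f a ≤ 1 - r := haA.2
    have hab : a < b := by
      rcases lt_or_eq_of_le hab' with h | h
      · exact h
      · exact absurd (hfb_eq ▸ (h ▸ hfa)) (not_le.mpr hc1)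
    have hgt : ∀ u, a < u → u ≤ b → 1 - r < f u := by
      intro u h1 h2
      by_contra hcon
      push_neg at hcon
      exact absurd (le_csSup hAbdd ⟨⟨le_trans hs₀a h1.le, h2⟩, hcon⟩)
        (not_le.mpr h1)
    have hfa_ge : 1 - r ≤ f a := by
      have htend : Tendsto f (nhdsWithin a (Set.Ioi a)) (nhds (f a)) :=
        (hf.tendsto a).mono_left nhdsWithin_le_nhds
      refine ge_of_tendsto htend ?_
      filter_upwards [Ioc_mem_nhdsGT_of_mem (Set.mem_Ico.mpr ⟨le_rfl, hab⟩)] with u hu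
      exact (hgt u hu.1 hu.2).le
    have hmab := hmono a b hab.le (by
      intro u hu
      refine ⟨?_, le_trans (hle_c u ⟨le_trans hs₀a hu.1, hu.2⟩) hc2⟩
      rcases lt_or_eq_of_le hu.1 with h | h
      · exact (hgt u h hu.2).le
      · exact h ▸ hfa_ge)
    have : c ≤ 1 - r := hfb_eq ▸ (le_trans hmab hfa)
    exact absurd this (not_le.mpr hc1)

/-- Dichotomy for the limiting distance between connected agents: if the
distance is non-increasing in the critical band `[1 - r, 1]`, its limit along a
sequence of times avoids `(0, 1)`, and it is strictly below `1` at some time,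
then the limit is `0`. -/
theorem stmt17 (xi xj : ℝ → ℝ) (hxi : Continuous xi) (hxj : Continuous xj)
    (r : ℝ) (hr0 : 0 < r) (hr1 : r < 1)
    (hmono : ∀ s t : ℝ, s ≤ t →
      (∀ u ∈ Set.Icc s t, |xi u - xj u| ∈ Set.Icc (1 - r) 1) →
      |xi t - xj t| ≤ |xi s - xj s|)
    (t : ℕ → ℝ) (ht : Tendsto t atTop atTop)
    (L : ℝ) (hL : Tendsto (fun n => |xi (t n) - xj (t n)|) atTop (nhds L))
    (hLnot : L ∉ Set.Ioo (0 : ℝ) 1)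
    (hbelow : ∃ n, |xi (t n) - xj (t n)| < 1) :
    L = 0 := by
  set f : ℝ → ℝ := fun u => |xi u - xj u| with hfdef
  have hf : Continuous f := (hxi.sub hxj).abs
  obtain ⟨n₀, hn₀⟩ := hbelow
  set m : ℝ := max (f (t n₀)) (1 - r) with hm
  have hm1 : m < 1 := max_lt hn₀ (by linarith)
  set c : ℝ := (m + 1) / 2 with hc
  have hmc : m < c := by rw [hc]; linarith
  have hc1 : c < 1 := by rw [hc]; linarith
  have hbar : ∀ u, t n₀ ≤ u → f u < c :=
    barrier f hf r hmono (t n₀) c (lt_of_le_of_lt (le_max_left _ _) hmc)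
      (lt_of_le_of_lt (le_max_right _ _) hmc) hc1.le
  have hLc : L ≤ c := by
    refine le_of_tendsto hL ?_
    filter_upwards [ht.eventually_ge_atTop (t n₀)] with n hn
    exact (hbar (t n) hn).le
  have hL0 : 0 ≤ L := ge_of_tendsto hL (Eventually.of_forall fun n => abs_nonneg _)
  rcases lt_or_eq_of_le hL0 with h | h
  · exact absurd ⟨h, lt_of_le_of_lt hLc hc1⟩ hLnot
  · exact h.symm
end
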